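/- Let A ∈ ℝ^{n×d} with top-k' left singular vectors U_{k'} and top-k left singular vectors U_k (k ≤ k'). If a matrix B ∈ ℝ^{n×ℓ} is (k',L)-good for A, then B is also (k,L)-good for A. Here B is (k,L)-good if there exists a matrix Q ∈ ℝ^{n×k} with orthonormal columns lying in range(B) such that U_k^T Q is invertible and ‖(U_k^T Q)^{-1}‖_2² ≤ L. -/

import Mathlib

open Matrix

/-- Euclidean norm of a vector. -/
noncomputable def enorm {n : Type*} [Fintype n] (x : n → ℝ) : ℝ :=
  Real.sqrt (∑ i, x i ^ 2)

/-- Largest singular value (spectral norm), as the supremum of `‖Mx‖` over unit vectors. -/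
noncomputable def sigMax {m n : Type*} [Fintype m] [Fintype n] (M : Matrix m n ℝ) : ℝ :=
  sSup {r | ∃ x : n → ℝ, _root_.enorm x = 1 ∧ r = _root_.enorm (M.mulVec x)}

lemma stmt14_dot_self {p : Type*} [Fintype p] (y : p → ℝ) :
    ∑ i, y i ^ 2 = y ⬝ᵥ y := by
  simp [dotProduct, sq]

lemma stmt14_gram {m p : Type*} [Fintype m] [Fintype p] (P : Matrix m p ℝ) (x : p → ℝ) :
    _root_.enorm (P.mulVec x) = Real.sqrt (x ⬝ᵥ ((Pᵀ * P) *ᵥ x)) := by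
  unfold _root_.enorm
  congr 1
  rw [stmt14_dot_self, ← Matrix.mulVec_mulVec]
  conv_rhs => rw [Matrix.dotProduct_mulVec, Matrix.vecMul_transpose]

lemma stmt14_gram_eq {m m' p : Type*} [Fintype m] [Fintype m'] [Fintype p]
    (P : Matrix m p ℝ) (W : Matrix m' p ℝ) (h : Pᵀ * P = Wᵀ * W) (x : p → ℝ) :
    _root_.enorm (P.mulVec x) = _root_.enorm (W.mulVec x) := by
  rw [stmt14_gram, stmt14_gram, h]

lemma stmt14_iso {m p : Type*} [Fintype m] [Fintype p] [DecidableEq p] (P : Matrix m p ℝ)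
    (h : Pᵀ * P = 1) (x : p → ℝ) : _root_.enorm (P.mulVec x) = _root_.enorm x := by
  rw [stmt14_gram, h, Matrix.one_mulVec]
  unfold _root_.enorm
  rw [stmt14_dot_self]

lemma stmt14_bdd {m p : Type*} [Fintype m] [Fintype p] (N : Matrix m p ℝ) :
    BddAbove {r | ∃ x : p → ℝ, _root_.enorm x = 1 ∧ r = _root_.enorm (N.mulVec x)} := by
  refine ⟨Real.sqrt (∑ i, ∑ j, N i j ^ 2), ?_⟩
  rintro r ⟨x, hx, rfl⟩
  have hx2 : ∑ j, x j ^ 2 = 1 := by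
    have h0 : (0:ℝ) ≤ ∑ j, x j ^ 2 := Finset.sum_nonneg fun _ _ => sq_nonneg _
    unfold _root_.enorm at hx
    nlinarith [Real.sq_sqrt h0]
  unfold _root_.enorm
  apply Real.sqrt_le_sqrt
  have : ∀ i, (N.mulVec x i) ^ 2 ≤ ∑ j, N i j ^ 2 := by
    intro i
    have := Finset.sum_mul_sq_le_sq_mul_sq Finset.univ (fun j => N i j) x
    simpa [Matrix.mulVec, dotProduct, hx2] using this
  exact Finset.sum_le_sum fun i _ => this i

lemma stmt14_empty {m p : Type*} [Fintype m] [Fintype p] [IsEmpty p] (N : Matrix m p ℝ) :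
    sigMax N = 0 := by
  unfold sigMax
  convert Real.sSup_empty using 2
  rw [Set.eq_empty_iff_forall_notMem]
  rintro r ⟨x, hx, -⟩
  unfold _root_.enorm at hx
  simp at hx

open scoped MatrixOrder in
lemma stmt14_sqrt {p : Type*} [Fintype p] [DecidableEq p] (S : Matrix p p ℝ) (h : S.PosSemidef) :
    ∃ R : Matrix p p ℝ, R * R = S ∧ R.transpose = R := by
  refine ⟨CFC.sqrt S, CFC.sqrt_mul_sqrt_self S h.nonneg, ?_⟩
  have := (Matrix.nonneg_iff_posSemidef.mp (CFC.sqrt_nonneg S)).isHermitian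
  rwa [Matrix.IsHermitian, Matrix.conjTranspose_eq_transpose_of_trivial] at this

/-- Smaller rank is easier: if `B` is `(k',L)`-good (witnessed by some `Q` with
orthonormal columns in `range(B)` with `U_{k'}ᵀQ` invertible and
`‖(U_{k'}ᵀQ)⁻¹‖₂² ≤ L`), then `B` is `(k,L)`-good for any `k ≤ k'`, where `U_k`
consists of the first `k` columns of `U_{k'}`. -/
theorem stmt14 (n k k' ℓ : ℕ) (hk : k ≤ k') (hkl : k' ≤ ℓ) (L : ℝ) (hL : 0 < L)
    (U' : Matrix (Fin n) (Fin k') ℝ) (hU' : U'ᵀ * U' = 1)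
    (B : Matrix (Fin n) (Fin ℓ) ℝ)
    (hgood : ∃ Q : Matrix (Fin n) (Fin k') ℝ,
      Qᵀ * Q = 1 ∧ (∃ C : Matrix (Fin ℓ) (Fin k') ℝ, Q = B * C) ∧
        IsUnit (U'ᵀ * Q).det ∧ sigMax ((U'ᵀ * Q)⁻¹) ^ 2 ≤ L) :
    ∃ Q : Matrix (Fin n) (Fin k) ℝ,
      Qᵀ * Q = 1 ∧ (∃ C : Matrix (Fin ℓ) (Fin k) ℝ, Q = B * C) ∧
        IsUnit ((Matrix.of fun i (j : Fin k) => U' i (Fin.castLE hk j))ᵀ * Q).det ∧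
        sigMax (((Matrix.of fun i (j : Fin k) => U' i (Fin.castLE hk j))ᵀ * Q)⁻¹) ^ 2 ≤ L := by
  by_cases hk0 : k = 0
  · subst hk0
    refine ⟨B * (0 : Matrix (Fin ℓ) (Fin 0) ℝ), Subsingleton.elim _ _,
      ⟨0, rfl⟩, by simp [Matrix.det_isEmpty], ?_⟩
    rw [stmt14_empty]
    simpa using hL.le
  obtain ⟨Q', hQ'1, ⟨C', rfl⟩, hMdet, hMbound⟩ := hgood
  set M : Matrix (Fin k') (Fin k') ℝ := U'ᵀ * (B * C') with hMdef
  set E : Matrix (Fin k') (Fin k) ℝ :=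
    Matrix.of (fun i j => if i = Fin.castLE hk j then (1:ℝ) else 0) with hEdef
  have hEE : Eᵀ * E = 1 := by
    ext a b
    simp only [hEdef, Matrix.mul_apply, Matrix.transpose_apply, Matrix.of_apply,
      Matrix.one_apply, ite_mul, one_mul, zero_mul]
    rw [Finset.sum_ite_eq' Finset.univ (Fin.castLE hk a)
      (fun x => if x = Fin.castLE hk b then (1:ℝ) else 0)]
    simp only [Finset.mem_univ, if_true]
    by_cases hab : a = b
    · simp [hab]
    · rw [if_neg, if_neg hab]
      simpa [Fin.castLE_inj] using hab
  have hEmul : ∀ x : Fin k → ℝ, E.mulVec x = fun (i : Fin k') =>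
      if h : (i : ℕ) < k then x ⟨i, h⟩ else 0 := by
    intro x
    funext i
    simp only [hEdef, Matrix.mulVec, dotProduct, Matrix.of_apply, ite_mul, one_mul,
      zero_mul]
    split
    · next h =>
      rw [Finset.sum_eq_single (⟨(i:ℕ), h⟩ : Fin k)]
      · simp [Fin.castLE, Fin.ext_iff]
      · intro b _ hb
        rw [if_neg]
        intro hc
        exact hb (by simp_all [Fin.ext_iff, Fin.castLE])
      · simp
    · next h =>
      apply Finset.sum_eq_zero
      intro b _
      rw [if_neg]
      intro hc
      subst hc
      exact h b.isLt
  set C : Matrix (Fin k') (Fin k) ℝ := M⁻¹ * E with hCdef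
  have hMC : M * C = E := by
    rw [hCdef, ← Matrix.mul_assoc, Matrix.mul_nonsing_inv _ hMdet, Matrix.one_mul]
  set S : Matrix (Fin k) (Fin k) ℝ := Cᵀ * C with hSdef
  have hSps : S.PosSemidef := by
    have := Matrix.posSemidef_conjTranspose_mul_self C
    rwa [Matrix.conjTranspose_eq_transpose_of_trivial] at this
  have hCinj : ∀ x : Fin k → ℝ, x ≠ 0 → C.mulVec x ≠ 0 := by
    intro x hx hc
    have h1 : M.mulVec (C.mulVec x) = E.mulVec x := by
      rw [Matrix.mulVec_mulVec, hMC]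
    rw [hc, Matrix.mulVec_zero] at h1
    apply hx
    funext j
    have := congrFun h1 (Fin.castLE hk j)
    rw [hEmul] at this
    simpa [j.2] using this.symm
  have hSpd : S.PosDef := by
    refine Matrix.PosDef.of_dotProduct_mulVec_pos hSps.isHermitian fun x hx => ?_
    have hxc := hCinj x hx
    have hdot : (star x) ⬝ᵥ (S *ᵥ x) = (C.mulVec x) ⬝ᵥ (C.mulVec x) := by
      rw [hSdef, ← Matrix.mulVec_mulVec, Matrix.dotProduct_mulVec]
      simp [Matrix.vecMul_transpose]
    rw [hdot, ← stmt14_dot_self]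
    rcases Function.ne_iff.mp hxc with ⟨i, hi⟩
    have h1 : (0:ℝ) < (C.mulVec x i) ^ 2 := pow_two_pos_of_ne_zero hi
    refine lt_of_lt_of_le h1 ?_
    exact Finset.single_le_sum (f := fun j => (C.mulVec x j) ^ 2)
      (fun j _ => sq_nonneg _) (Finset.mem_univ i)
  obtain ⟨R, hRR, hRsym⟩ := stmt14_sqrt S hSps
  have hRdet : IsUnit R.det := by
    have : R.det * R.det = S.det := by rw [← Matrix.det_mul, hRR]
    have hSdet : 0 < S.det := hSpd.det_pos
    refine isUnit_iff_ne_zero.mpr fun h => ?_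
    rw [h, mul_zero] at this
    exact hSdet.ne' this.symm
  set Q : Matrix (Fin n) (Fin k) ℝ := (B * C') * (C * R⁻¹) with hQdef
  have hRinvT : (R⁻¹)ᵀ = R⁻¹ := by rw [Matrix.transpose_nonsing_inv, hRsym]
  have hUk : (Matrix.of fun i (j : Fin k) => U' i (Fin.castLE hk j)) = U' * E := by
    ext i j
    simp [hEdef, Matrix.mul_apply, mul_ite, Finset.sum_ite_eq]
  have hUkQ : (Matrix.of fun i (j : Fin k) => U' i (Fin.castLE hk j))ᵀ * Q = R⁻¹ := by
    rw [hUk, hQdef, Matrix.transpose_mul]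
    calc Eᵀ * U'ᵀ * (B * C' * (C * R⁻¹)) = Eᵀ * ((M * C) * R⁻¹) := by
          rw [hMdef]; simp only [Matrix.mul_assoc]
      _ = (Eᵀ * E) * R⁻¹ := by rw [hMC, Matrix.mul_assoc]
      _ = R⁻¹ := by rw [hEE, Matrix.one_mul]
  refine ⟨Q, ?_, ⟨C' * (C * R⁻¹), by rw [hQdef, Matrix.mul_assoc]⟩, ?_, ?_⟩
  · rw [hQdef]
    calc ((B * C') * (C * R⁻¹))ᵀ * ((B * C') * (C * R⁻¹))
        = (C * R⁻¹)ᵀ * ((B * C')ᵀ * (B * C')) * (C * R⁻¹) := by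
          rw [Matrix.transpose_mul]; simp only [Matrix.mul_assoc]
      _ = (C * R⁻¹)ᵀ * (C * R⁻¹) := by rw [hQ'1, Matrix.mul_one]
      _ = R⁻¹ * (Cᵀ * C) * R⁻¹ := by rw [Matrix.transpose_mul, hRinvT]; simp only [Matrix.mul_assoc]
      _ = R⁻¹ * (R * R) * R⁻¹ := by rw [← hSdef, hRR]
      _ = 1 := by
          rw [← Matrix.mul_assoc, Matrix.mul_assoc (R⁻¹ * R), Matrix.mul_nonsing_inv _ hRdet,
            Matrix.mul_one, Matrix.nonsing_inv_mul _ hRdet]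
  · rw [hUkQ]
    exact Matrix.isUnit_nonsing_inv_det _ hRdet
  · rw [hUkQ, Matrix.nonsing_inv_nonsing_inv _ hRdet]
    -- sigMax R = sigMax C
    have hRC : ∀ x, _root_.enorm (R.mulVec x) = _root_.enorm (C.mulVec x) := by
      intro x
      apply stmt14_gram_eq
      rw [hRsym, hRR, ← hSdef]
    have hsetRC : sigMax R = sigMax C := by
      unfold sigMax
      congr 1
      ext r
      constructor
      · rintro ⟨x, hx, rfl⟩; exact ⟨x, hx, hRC x⟩
      · rintro ⟨x, hx, rfl⟩; exact ⟨x, hx, (hRC x).symm⟩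
    -- sigMax C ≤ sigMax M⁻¹
    have hsub : {r | ∃ x : Fin k → ℝ, _root_.enorm x = 1 ∧ r = _root_.enorm (C.mulVec x)} ⊆
        {r | ∃ x : Fin k' → ℝ, _root_.enorm x = 1 ∧ r = _root_.enorm ((M⁻¹).mulVec x)} := by
      rintro r ⟨x, hx, rfl⟩
      refine ⟨E.mulVec x, ?_, ?_⟩
      · rw [stmt14_iso E hEE, hx]
      · rw [hCdef, ← Matrix.mulVec_mulVec]
    obtain ⟨j0, hj0⟩ : ∃ j0 : Fin k, True := ⟨⟨0, Nat.pos_of_ne_zero hk0⟩, trivial⟩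
    have hsum : ∑ i, (Pi.single j0 1 : Fin k → ℝ) i ^ 2 = 1 := by
      simp [Pi.single_apply, ite_pow]
    have hunit : _root_.enorm ((Pi.single j0 1 : Fin k → ℝ)) = 1 := by
      unfold _root_.enorm
      rw [hsum]
      exact Real.sqrt_one
    have hne : {r | ∃ x : Fin k → ℝ, _root_.enorm x = 1 ∧ r = _root_.enorm (C.mulVec x)}.Nonempty :=
      ⟨_, (Pi.single j0 1 : Fin k → ℝ), hunit, rfl⟩
    have hCM : sigMax C ≤ sigMax (M⁻¹) := csSup_le_csSup (stmt14_bdd _) hne hsub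
    have hCnn : 0 ≤ sigMax C := by
      have hmem : _root_.enorm (C.mulVec ((Pi.single j0 1 : Fin k → ℝ))) ∈
          {r | ∃ x : Fin k → ℝ, _root_.enorm x = 1 ∧ r = _root_.enorm (C.mulVec x)} :=
        ⟨(Pi.single j0 1 : Fin k → ℝ), hunit, rfl⟩
      have := le_csSup (BddAbove.mono hsub (stmt14_bdd (M⁻¹))) hmem
      exact le_trans (Real.sqrt_nonneg _) this
    calc sigMax R ^ 2 = sigMax C ^ 2 := by rw [hsetRC]
      _ ≤ sigMax (M⁻¹) ^ 2 := by exact pow_le_pow_left₀ hCnn hCM 2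
      _ ≤ L := hMbound
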